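/- Let ξ = (ξ₁, ξ₂) ∈ ℝ² be nonzero, set k = √(ξ₁² + ξ₂²), and let a, a₁, a₂, b₁, b₂, c ∈ ℂ. Define X(ρ) = a·exp(−kρ) + (i/k)(b₁ξ₁ + b₂ξ₂)·ρ·exp(−kρ) + c·((3/10)kρ² + ρ)·exp(−kρ) and X_A(ρ) = a_A·exp(−kρ) + b_A·ρ·exp(−kρ) − (3/10)·i·c·ξ_A·ρ²·exp(−kρ) for A = 1, 2. If X(0) = 0, X₁(0) = 0, X₂(0) = 0, X'(0) = 0, X₁'(0) = 0 and X₂'(0) = 0, then a = a₁ = a₂ = b₁ = b₂ = c = 0, and hence X, X₁, X₂ are identically zero. -/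

import Mathlib

open Complex

/-- The quantity `E₀ = 4X'' − k²X + 3i(ξ₁X₁' + ξ₂X₂')` from the principal part of the
shift component of the approximate Killing vector equation. -/
noncomputable def shiftE0 (k ξ₁ ξ₂ : ℝ) (X X₁ X₂ : ℝ → ℂ) : ℝ → ℂ :=
  fun ρ => 4 * deriv (deriv X) ρ - (k : ℂ) ^ 2 * X ρ
    + 3 * Complex.I * ((ξ₁ : ℂ) * deriv X₁ ρ + (ξ₂ : ℂ) * deriv X₂ ρ)

/-- The quantity `E_A = X_A'' − k²X_A + 3iξ_A(X' + i(ξ₁X₁ + ξ₂X₂))` for `A = 1, 2`. -/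
noncomputable def shiftEA (k ξA ξ₁ ξ₂ : ℝ) (X XA X₁ X₂ : ℝ → ℂ) : ℝ → ℂ :=
  fun ρ => deriv (deriv XA) ρ - (k : ℂ) ^ 2 * XA ρ
    + 3 * Complex.I * (ξA : ℂ) * (deriv X ρ + Complex.I * ((ξ₁ : ℂ) * X₁ ρ + (ξ₂ : ℂ) * X₂ ρ))

/-- The shift Lopatinskij–Shapiro ODE system: `E₀'' − k²E₀ = 0` and `E_A'' − k²E_A = 0`
for `A = 1, 2`, at the point `ρ`. -/
def shiftLS (k ξ₁ ξ₂ : ℝ) (X X₁ X₂ : ℝ → ℂ) (ρ : ℝ) : Prop :=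
  deriv (deriv (shiftE0 k ξ₁ ξ₂ X X₁ X₂)) ρ
      - (k : ℂ) ^ 2 * shiftE0 k ξ₁ ξ₂ X X₁ X₂ ρ = 0 ∧
  deriv (deriv (shiftEA k ξ₁ ξ₁ ξ₂ X X₁ X₁ X₂)) ρ
      - (k : ℂ) ^ 2 * shiftEA k ξ₁ ξ₁ ξ₂ X X₁ X₁ X₂ ρ = 0 ∧
  deriv (deriv (shiftEA k ξ₂ ξ₁ ξ₂ X X₂ X₁ X₂)) ρ
      - (k : ℂ) ^ 2 * shiftEA k ξ₂ ξ₁ ξ₂ X X₂ X₁ X₂ ρ = 0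

/-- The lapse component `X(ρ) = a·e^{−kρ} + (i/k)(b₁ξ₁ + b₂ξ₂)·ρ·e^{−kρ}
   + c·((3/10)kρ² + ρ)·e^{−kρ}` of the stable solution family. -/
noncomputable def shiftXstable (k ξ₁ ξ₂ : ℝ) (a b₁ b₂ c : ℂ) : ℝ → ℂ :=
  fun ρ => a * Complex.exp (-(k : ℂ) * ρ)
    + (Complex.I / (k : ℂ)) * (b₁ * (ξ₁ : ℂ) + b₂ * (ξ₂ : ℂ)) * (ρ : ℂ) * Complex.exp (-(k : ℂ) * ρ)
    + c * ((3 / 10) * (k : ℂ) * (ρ : ℂ) ^ 2 + (ρ : ℂ)) * Complex.exp (-(k : ℂ) * ρ)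

/-- The components `X_A(ρ) = a_A·e^{−kρ} + b_A·ρ·e^{−kρ} − (3/10)i·c·ξ_A·ρ²·e^{−kρ}`
of the stable solution family, `A = 1, 2`. -/
noncomputable def shiftXAstable (k ξA : ℝ) (aA bA c : ℂ) : ℝ → ℂ :=
  fun ρ => aA * Complex.exp (-(k : ℂ) * ρ) + bA * (ρ : ℂ) * Complex.exp (-(k : ℂ) * ρ)
    - (3 / 10) * Complex.I * c * (ξA : ℂ) * (ρ : ℂ) ^ 2 * Complex.exp (-(k : ℂ) * ρ)

/-- if the stable family satisfies the vanishing boundary conditions at `ρ = 0`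
(values and first derivatives), then all six constants vanish and the functions are
identically zero. -/
private lemma shift_aux_hasDeriv (k : ℝ) (p q r : ℂ) :
    HasDerivAt (fun ρ : ℝ => p * Complex.exp (-(k : ℂ) * ρ)
      + q * (ρ : ℂ) * Complex.exp (-(k : ℂ) * ρ)
      + r * (ρ : ℂ) ^ 2 * Complex.exp (-(k : ℂ) * ρ)) (q - (k : ℂ) * p) 0 := by
  have hr : HasDerivAt (fun ρ : ℝ => (ρ : ℂ)) 1 0 := by
    exact Complex.ofRealCLM.hasDerivAt (x := (0:ℝ))
  have he : HasDerivAt (fun ρ : ℝ => Complex.exp (-(k : ℂ) * ρ)) (-(k : ℂ)) 0 := by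
    have := (hr.const_mul (-(k : ℂ))).cexp
    simpa using this
  have h1 := he.const_mul p
  have h2 := (hr.mul he).const_mul q
  have hp : HasDerivAt (fun ρ : ℝ => (ρ : ℂ) ^ 2) 0 0 := by
    have := hr.mul hr; simp [pow_two] at this ⊢; exact this
  have h3 := (hp.mul he).const_mul r
  have h := (h1.add h2).add h3
  convert h using 1
  · rfl
  · funext ρ; simp only [Pi.add_apply, Pi.mul_apply]; ring
  · simp [Complex.exp_zero]; ring

theorem shift_LS_stable_family_boundary_conditions (ξ₁ ξ₂ : ℝ) (hξ : ξ₁ ≠ 0 ∨ ξ₂ ≠ 0)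
    (k : ℝ) (hk : k = Real.sqrt (ξ₁ ^ 2 + ξ₂ ^ 2))
    (a a₁ a₂ b₁ b₂ c : ℂ)
    (hX0 : shiftXstable k ξ₁ ξ₂ a b₁ b₂ c 0 = 0)
    (hX10 : shiftXAstable k ξ₁ a₁ b₁ c 0 = 0)
    (hX20 : shiftXAstable k ξ₂ a₂ b₂ c 0 = 0)
    (hX0' : deriv (shiftXstable k ξ₁ ξ₂ a b₁ b₂ c) 0 = 0)
    (hX10' : deriv (shiftXAstable k ξ₁ a₁ b₁ c) 0 = 0)
    (hX20' : deriv (shiftXAstable k ξ₂ a₂ b₂ c) 0 = 0) :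
    a = 0 ∧ a₁ = 0 ∧ a₂ = 0 ∧ b₁ = 0 ∧ b₂ = 0 ∧ c = 0 ∧
    (∀ ρ : ℝ, shiftXstable k ξ₁ ξ₂ a b₁ b₂ c ρ = 0 ∧
      shiftXAstable k ξ₁ a₁ b₁ c ρ = 0 ∧ shiftXAstable k ξ₂ a₂ b₂ c ρ = 0) := by
  have ha : a = 0 := by simpa [shiftXstable] using hX0
  have ha1 : a₁ = 0 := by simpa [shiftXAstable] using hX10
  have ha2 : a₂ = 0 := by simpa [shiftXAstable] using hX20
  have eX : shiftXstable k ξ₁ ξ₂ a b₁ b₂ c = fun ρ : ℝ =>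
      a * Complex.exp (-(k : ℂ) * ρ)
      + ((Complex.I / (k : ℂ)) * (b₁ * (ξ₁ : ℂ) + b₂ * (ξ₂ : ℂ)) + c) * (ρ : ℂ)
          * Complex.exp (-(k : ℂ) * ρ)
      + (c * ((3 : ℂ) / 10) * (k : ℂ)) * (ρ : ℂ) ^ 2 * Complex.exp (-(k : ℂ) * ρ) := by
    funext ρ; simp only [shiftXstable]; ring
  have e1 : shiftXAstable k ξ₁ a₁ b₁ c = fun ρ : ℝ =>
      a₁ * Complex.exp (-(k : ℂ) * ρ) + b₁ * (ρ : ℂ) * Complex.exp (-(k : ℂ) * ρ)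
      + (-((3 : ℂ) / 10) * Complex.I * c * (ξ₁ : ℂ)) * (ρ : ℂ) ^ 2
          * Complex.exp (-(k : ℂ) * ρ) := by
    funext ρ; simp only [shiftXAstable]; ring
  have e2 : shiftXAstable k ξ₂ a₂ b₂ c = fun ρ : ℝ =>
      a₂ * Complex.exp (-(k : ℂ) * ρ) + b₂ * (ρ : ℂ) * Complex.exp (-(k : ℂ) * ρ)
      + (-((3 : ℂ) / 10) * Complex.I * c * (ξ₂ : ℂ)) * (ρ : ℂ) ^ 2
          * Complex.exp (-(k : ℂ) * ρ) := by
    funext ρ; simp only [shiftXAstable]; ring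
  have dX := (shift_aux_hasDeriv k a ((Complex.I / (k : ℂ)) * (b₁ * (ξ₁ : ℂ) + b₂ * (ξ₂ : ℂ)) + c)
      (c * ((3 : ℂ) / 10) * (k : ℂ))).deriv
  have d1 := (shift_aux_hasDeriv k a₁ b₁ (-((3 : ℂ) / 10) * Complex.I * c * (ξ₁ : ℂ))).deriv
  have d2 := (shift_aux_hasDeriv k a₂ b₂ (-((3 : ℂ) / 10) * Complex.I * c * (ξ₂ : ℂ))).deriv
  rw [eX, dX] at hX0'
  rw [e1, d1] at hX10'
  rw [e2, d2] at hX20'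
  have hb1 : b₁ = 0 := by rw [ha1] at hX10'; simpa using hX10'
  have hb2 : b₂ = 0 := by rw [ha2] at hX20'; simpa using hX20'
  have hc : c = 0 := by rw [ha, hb1, hb2] at hX0'; simpa using hX0'
  refine ⟨ha, ha1, ha2, hb1, hb2, hc, fun ρ => ?_⟩
  simp [shiftXstable, shiftXAstable, ha, ha1, ha2, hb1, hb2, hc]
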